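/- Define on [0,π] the operations α ⊕ β = min{α+β, 2π−(α+β)} and α ⊖ β = |α − β|. For unit vectors in S², if u has polar angle φ ∈ [0,π] (angle to the north pole n = (0,0,1)), then the set of polar angles of points at spherical distance α ∈ (0,π) from u is exactly the interval [min{φ⊖α, φ⊕α}, max{φ⊖α, φ⊕α}]. -/
import Mathlib


open Real
open scoped RealInnerProductSpace

/-- The spherical (geodesic) distance between unit vectors. -/
noncomputable def sdist (u v : EuclideanSpace ℝ (Fin 3)) : ℝ :=
  Real.arccos ⟪u, v⟫

/-- The north pole `(0,0,1)` of the unit sphere in `ℝ³`. -/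
noncomputable def north : EuclideanSpace ℝ (Fin 3) := EuclideanSpace.single 2 1

/-- `α ⊕ β = min {α + β, 2π - (α + β)}`. -/
noncomputable def oplus (a b : ℝ) : ℝ := min (a + b) (2 * π - (a + b))

/-- `α ⊖ β = |α - β|`. -/
def ominus (a b : ℝ) : ℝ := |a - b|

lemma exists_unit_orthogonal (u v : EuclideanSpace ℝ (Fin 3)) :
    ∃ f : EuclideanSpace ℝ (Fin 3), ‖f‖ = 1 ∧ ⟪u, f⟫ = 0 ∧ ⟪v, f⟫ = 0 := by
  letI := Classical.decEq (EuclideanSpace ℝ (Fin 3))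
  set K : Submodule ℝ (EuclideanSpace ℝ (Fin 3)) := Submodule.span ℝ {u, v} with hK
  have hcard : Module.finrank ℝ K ≤ 2 := by
    have h := finrank_span_finset_le_card (R := ℝ) ({u, v} : Finset _)
    have hc : ({u, v} : Finset _).card ≤ 2 := Finset.card_insert_le _ _ |>.trans (by simp)
    have hs : ((({u, v} : Finset (EuclideanSpace ℝ (Fin 3)))) : Set _) = {u, v} := by simp
    rw [hs] at h
    exact h.trans hc
  have htot : Module.finrank ℝ K + Module.finrank ℝ Kᗮ = 3 := by
    rw [Submodule.finrank_add_finrank_orthogonal, finrank_euclideanSpace_fin]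
  have hpos : 0 < Module.finrank ℝ Kᗮ := by omega
  have : Nontrivial Kᗮ := Module.finrank_pos_iff.mp hpos
  obtain ⟨g, hg⟩ := exists_ne (0 : Kᗮ)
  have hgE : (g : EuclideanSpace ℝ (Fin 3)) ≠ 0 := by
    simpa using Subtype.coe_injective.ne hg
  refine ⟨‖(g : EuclideanSpace ℝ (Fin 3))‖⁻¹ • g, ?_, ?_, ?_⟩
  · rw [norm_smul, norm_inv, norm_norm, inv_mul_cancel₀ (norm_ne_zero_iff.mpr hgE)]
  · rw [real_inner_smul_right,
      Submodule.inner_right_of_mem_orthogonal (Submodule.subset_span (by simp)) g.2, mul_zero]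
  · rw [real_inner_smul_right,
      Submodule.inner_right_of_mem_orthogonal (Submodule.subset_span (by simp)) g.2, mul_zero]

lemma arccos_le_arccos' {x y : ℝ} (h : x ≤ y) : Real.arccos y ≤ Real.arccos x := by
  unfold Real.arccos
  have := Real.monotone_arcsin h
  linarith

set_option maxHeartbeats 1000000 in

/-- For a unit vector `u` with polar angle `φ` (the angle to the north pole), the set of
polar angles of points of the unit sphere at spherical distance `α ∈ (0,π)` from `u` is
exactly the interval `[min {φ⊖α, φ⊕α}, max {φ⊖α, φ⊕α}]`. -/
theorem polar_angles_of_spherical_circle (u : EuclideanSpace ℝ (Fin 3))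
    (hu : ‖u‖ = 1) (φ : ℝ) (hφ : sdist north u = φ)
    (α : ℝ) (hα : α ∈ Set.Ioo 0 π) :
    {ψ : ℝ | ∃ w : EuclideanSpace ℝ (Fin 3),
        ‖w‖ = 1 ∧ sdist u w = α ∧ sdist north w = ψ} =
      Set.Icc (min (ominus φ α) (oplus φ α)) (max (ominus φ α) (oplus φ α)) := by
  obtain ⟨hα0, hαπ⟩ := hα
  have hn : ‖north‖ = 1 := by
    rw [north, EuclideanSpace.norm_single]; norm_num
  set c : ℝ := ⟪north, u⟫ with hc_def
  have hc1 : |c| ≤ 1 := by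
    have := abs_real_inner_le_norm north u
    rwa [hn, hu, one_mul] at this
  have hφdef : φ = Real.arccos c := hφ.symm
  have hφ0 : 0 ≤ φ := hφdef ▸ Real.arccos_nonneg c
  have hφπ : φ ≤ π := hφdef ▸ Real.arccos_le_pi c
  have hcos : Real.cos φ = c := by
    rw [hφdef, Real.cos_arccos (neg_le_of_abs_le hc1) (le_of_abs_le hc1)]
  have hsinφ : Real.sin φ = Real.sqrt (1 - c ^ 2) := by
    rw [hφdef, Real.sin_arccos]
  have hsinφ0 : 0 ≤ Real.sin φ := Real.sin_nonneg_of_nonneg_of_le_pi hφ0 hφπ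
  have hsinα0 : 0 < Real.sin α := Real.sin_pos_of_pos_of_lt_pi hα0 hαπ
  have hsinα : Real.sin α = Real.sqrt (1 - Real.cos α ^ 2) :=
    Real.sin_eq_sqrt_one_sub_cos_sq hα0.le hαπ.le
  -- norm of (north - c • u)
  have hnc : ‖north - c • u‖ = Real.sin φ := by
    have h1 : ‖north - c • u‖ ^ 2 = 1 - c ^ 2 := by
      rw [norm_sub_sq_real, real_inner_smul_right, norm_smul, hn, hu]
      simp [← hc_def]
      ring
    rw [← Real.sqrt_sq (norm_nonneg _), h1, hsinφ]
  -- ominus ≤ oplus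
  have homin : ominus φ α ≤ oplus φ α := by
    rw [ominus, oplus]
    refine le_min ?_ ?_ <;> rw [abs_sub_le_iff] <;> constructor <;> linarith
  have hmin : min (ominus φ α) (oplus φ α) = ominus φ α := min_eq_left homin
  have hmax : max (ominus φ α) (oplus φ α) = oplus φ α := max_eq_right homin
  -- arccos of cos(φ+α) is oplus, arccos of cos(φ-α) is ominus
  have hoplus0 : 0 ≤ oplus φ α := by
    rw [oplus]; rcases le_total (φ + α) (2 * π - (φ + α)) with h | h
    · rw [min_eq_left h]; linarith
    · rw [min_eq_right h]; linarith [Real.pi_pos]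
  have hoplusπ : oplus φ α ≤ π := by
    rw [oplus]; rcases le_total (φ + α) π with h | h
    · exact (min_le_left _ _).trans h
    · exact (min_le_right _ _).trans (by linarith)
  have hcosoplus : Real.cos (oplus φ α) = Real.cos (φ + α) := by
    rw [oplus]; rcases le_total (φ + α) (2 * π - (φ + α)) with h | h
    · rw [min_eq_left h]
    · rw [min_eq_right h, Real.cos_two_pi_sub]
  have harccos_add : Real.arccos (Real.cos (φ + α)) = oplus φ α := by
    rw [← hcosoplus, Real.arccos_cos hoplus0 hoplusπ]
  have hominus0 : 0 ≤ ominus φ α := abs_nonneg _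
  have hominusπ : ominus φ α ≤ π := by
    rw [ominus, abs_sub_le_iff]; constructor <;> linarith
  have harccos_sub : Real.arccos (Real.cos (φ - α)) = ominus φ α := by
    rw [← Real.cos_abs (φ - α), show |φ - α| = ominus φ α from rfl,
      Real.arccos_cos hominus0 hominusπ]
  ext ψ
  simp only [Set.mem_setOf_eq, Set.mem_Icc, hmin, hmax]
  constructor
  · rintro ⟨w, hw, hwα, hwψ⟩
    -- forward direction
    set t : ℝ := ⟪u, w⟫ with ht_def
    have ht1 : |t| ≤ 1 := by
      have := abs_real_inner_le_norm u w
      rwa [hu, hw, one_mul] at this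
    have htcos : t = Real.cos α := by
      rw [← hwα, sdist, Real.cos_arccos (neg_le_of_abs_le ht1) (le_of_abs_le ht1)]
    set b : ℝ := ⟪north, w⟫ with hb_def
    have hb1 : |b| ≤ 1 := by
      have := abs_real_inner_le_norm north w
      rwa [hn, hw, one_mul] at this
    have hwc : ‖w - t • u‖ = Real.sin α := by
      have h1 : ‖w - t • u‖ ^ 2 = 1 - t ^ 2 := by
        rw [norm_sub_sq_real, real_inner_smul_right, norm_smul, hw, hu]
        have : ⟪w, u⟫ = t := (real_inner_comm u w).trans ht_def.symm
        rw [this]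
        simp
        ring
      rw [← Real.sqrt_sq (norm_nonneg _), h1, htcos, hsinα]
    have hkey : b - c * t = ⟪north - c • u, w - t • u⟫ := by
      rw [inner_sub_left, inner_sub_right, inner_sub_right, real_inner_smul_left,
        real_inner_smul_left, real_inner_smul_right, real_inner_smul_right,
        real_inner_self_eq_norm_sq, hu]
      rw [← hc_def, ← hb_def, ← ht_def]
      ring
    have hbound : |b - c * t| ≤ Real.sin φ * Real.sin α := by
      rw [hkey]
      calc |⟪north - c • u, w - t • u⟫| ≤ ‖north - c • u‖ * ‖w - t • u‖ :=
            abs_real_inner_le_norm _ _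
        _ = Real.sin φ * Real.sin α := by rw [hnc, hwc]
    rw [htcos] at hbound
    rw [abs_sub_le_iff] at hbound
    have hblo : Real.cos (φ + α) ≤ b := by
      rw [Real.cos_add, hcos]; linarith [hbound.2]
    have hbhi : b ≤ Real.cos (φ - α) := by
      rw [Real.cos_sub, hcos]; linarith [hbound.1]
    have hψ : ψ = Real.arccos b := hwψ.symm
    constructor
    · rw [hψ, ← harccos_sub]; exact arccos_le_arccos' hbhi
    · rw [hψ, ← harccos_add]; exact arccos_le_arccos' hblo
  · rintro ⟨h1, h2⟩
    -- reverse direction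
    have hψ0 : 0 ≤ ψ := hominus0.trans h1
    have hψπ : ψ ≤ π := h2.trans hoplusπ
    set b : ℝ := Real.cos ψ with hb_def
    have hblo : Real.cos (φ + α) ≤ b := by
      rw [← hcosoplus]
      exact Real.cos_le_cos_of_nonneg_of_le_pi hψ0 hoplusπ h2
    have hbhi : b ≤ Real.cos (φ - α) := by
      rw [← Real.cos_abs (φ - α)]
      exact Real.cos_le_cos_of_nonneg_of_le_pi hominus0 hψπ h1
    rw [Real.cos_add, hcos] at hblo
    rw [Real.cos_sub, hcos] at hbhi
    have harccosb : Real.arccos b = ψ := by rw [hb_def, Real.arccos_cos hψ0 hψπ]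
    by_cases hsφ : Real.sin φ = 0
    · -- degenerate case
      rw [hsφ] at hblo hbhi
      have hb : b = c * Real.cos α := le_antisymm (by linarith) (by linarith)
      obtain ⟨f, hf, huf, hnf⟩ := exists_unit_orthogonal u north
      refine ⟨Real.cos α • u + Real.sin α • f, ?_, ?_, ?_⟩
      · have : ‖Real.cos α • u + Real.sin α • f‖ ^ 2 = 1 := by
          rw [norm_add_sq_real, real_inner_smul_left, real_inner_smul_right, huf,
            norm_smul, norm_smul, hu, hf, mul_one, mul_one, Real.norm_eq_abs,
            Real.norm_eq_abs, sq_abs, sq_abs]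
          nlinarith [Real.sin_sq_add_cos_sq α]
        nlinarith [norm_nonneg (Real.cos α • u + Real.sin α • f)]
      · rw [sdist, inner_add_right, real_inner_smul_right, real_inner_smul_right, huf,
          real_inner_self_eq_norm_sq, hu]
        simp [Real.arccos_cos hα0.le hαπ.le]
      · have hφval : c ^ 2 = 1 := by
          have := Real.sin_sq_add_cos_sq φ
          rw [hsφ, hcos] at this; nlinarith
        have hnu : ⟪north, f⟫ = 0 := hnf
        rw [sdist, inner_add_right, real_inner_smul_right, real_inner_smul_right, hnu,
          ← hc_def]
        have hcb : Real.cos α * c = b := by rw [hb]; ring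
        rw [mul_zero, add_zero, hcb, harccosb]
    · -- nondegenerate case
      have hsφ0 : 0 < Real.sin φ := lt_of_le_of_ne hsinφ0 (Ne.symm hsφ)
      set e : EuclideanSpace ℝ (Fin 3) := (Real.sin φ)⁻¹ • (north - c • u) with he_def
      have hne : Real.sin φ • e = north - c • u := by
        rw [he_def, smul_smul, mul_inv_cancel₀ (ne_of_gt hsφ0), one_smul]
      have he : ‖e‖ = 1 := by
        rw [he_def, norm_smul, hnc, norm_inv, Real.norm_eq_abs, abs_of_pos hsφ0,
          inv_mul_cancel₀ (ne_of_gt hsφ0)]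
      have hune : ⟪u, north - c • u⟫ = 0 := by
        rw [inner_sub_right, real_inner_smul_right, real_inner_self_eq_norm_sq, hu]
        have h2 : ⟪u, north⟫ = c := (real_inner_comm north u).trans hc_def.symm
        rw [h2]; ring
      have hue : ⟪u, e⟫ = 0 := by
        rw [he_def, real_inner_smul_right, hune, mul_zero]
      obtain ⟨f, hf, huf, hef⟩ := exists_unit_orthogonal u e
      have hc2le : c ^ 2 ≤ 1 := (sq_le_one_iff_abs_le_one c).mpr hc1
      have hnorth_e : ⟪north, e⟫ = Real.sin φ := by
        rw [he_def, real_inner_smul_right, inner_sub_right, real_inner_smul_right,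
          real_inner_self_eq_norm_sq, hn, ← hc_def]
        have h1c2 : (1:ℝ) ^ 2 - c * c = Real.sin φ ^ 2 := by
          rw [hsinφ, Real.sq_sqrt (by nlinarith)]; ring
        rw [h1c2]
        rw [sq]
        rw [inv_mul_cancel_left₀ (ne_of_gt hsφ0)]
      have hnf : ⟪north, f⟫ = 0 := by
        have : north = c • u + Real.sin φ • e := by rw [hne]; abel
        rw [this, inner_add_left, real_inner_smul_left, real_inner_smul_left, huf, hef]
        ring
      clear_value e
      set t : ℝ := (b - c * Real.cos α) / (Real.sin φ * Real.sin α) with ht_def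
      have hprod : 0 < Real.sin φ * Real.sin α := mul_pos hsφ0 hsinα0
      have ht1 : |t| ≤ 1 := by
        rw [ht_def, abs_div, abs_of_pos hprod, div_le_one hprod, abs_sub_le_iff]
        constructor <;> linarith
      have ht2 : t ^ 2 ≤ 1 := (sq_le_one_iff_abs_le_one t).mpr ht1
      set s : ℝ := Real.sqrt (1 - t ^ 2) with hs_def
      have hs2 : s ^ 2 = 1 - t ^ 2 := Real.sq_sqrt (by linarith)
      set w : EuclideanSpace ℝ (Fin 3) :=
        Real.cos α • u + (Real.sin α * t) • e + (Real.sin α * s) • f with hw_def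
      clear_value w
      have hfu : ⟪f, u⟫ = 0 := (real_inner_comm u f).trans huf
      have hfe : ⟪f, e⟫ = 0 := (real_inner_comm e f).trans hef
      have heu : ⟪e, u⟫ = 0 := (real_inner_comm u e).trans hue
      have hww : ⟪w, w⟫ = 1 := by
        rw [hw_def]
        simp only [inner_add_left, inner_add_right, real_inner_smul_left,
          real_inner_smul_right, hue, hue, huf, hef, hfu, hfe, heu,
          real_inner_self_eq_norm_sq, hu, hf, he, norm_smul, Real.norm_eq_abs,
          mul_pow, sq_abs]
        linear_combination Real.sin α ^ 2 * hs2 + Real.sin_sq_add_cos_sq α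
      have hwnorm : ‖w‖ = 1 := by
        have := real_inner_self_eq_norm_sq w
        rw [hww] at this
        rw [← Real.sqrt_sq (norm_nonneg w), ← this, Real.sqrt_one]
      refine ⟨w, hwnorm, ?_, ?_⟩
      · rw [sdist, hw_def]
        simp only [inner_add_right, real_inner_smul_right, hue, huf,
          real_inner_self_eq_norm_sq, hu]
        norm_num [Real.arccos_cos hα0.le hαπ.le]
      · rw [sdist, hw_def]
        simp only [inner_add_right, real_inner_smul_right, hnorth_e, hnf, ← hc_def]
        have : Real.cos α * c + Real.sin α * t * Real.sin φ + Real.sin α * s * 0 = b := by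
          rw [ht_def]; field_simp; ring
        rw [this, harccosb]
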